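/- Let ρ = (−1+√3 i)/2 and 0 < δ < 1/2, and set δ' = (δ/2)√(1 − δ²/4) − (√3/4)δ². Then for every τ in the closed fundamental domain F̄ with |τ − ρ| > δ and |τ + ρ²| > δ, we have Im τ ≥ √3/2 + δ'. -/

import Mathlib

/-- The primitive third root of unity in the upper half-plane. -/
noncomputable def ρ : ℂ := (-1 + Real.sqrt 3 * Complex.I) / 2

/-- The closed fundamental domain for `SL₂(ℤ)` acting on the upper half-plane. -/
def closedFD : Set ℂ :=
  {τ : ℂ | 0 < τ.im ∧ -(1 / 2) ≤ τ.re ∧ τ.re ≤ 1 / 2 ∧ 1 ≤ ‖τ‖}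

/-- Key algebraic inequality: if `0 ≤ u ≤ 1/2`, `v > -√3/2`, `u² + v² > δ²` and
`u ≤ u² + v² + √3 v`, then `v ≥ (δ/2)√(1 - δ²/4) - (√3/4)δ²`. -/
lemma key_corner_ineq {δ u v : ℝ} (hδ0 : 0 < δ) (hδ : δ < 1 / 2) (hu0 : 0 ≤ u)
    (hu1 : u ≤ 1 / 2) (hv : -(Real.sqrt 3) / 2 < v)
    (h1 : δ ^ 2 < u ^ 2 + v ^ 2)
    (h2 : u ≤ u ^ 2 + v ^ 2 + Real.sqrt 3 * v) :
    δ / 2 * Real.sqrt (1 - δ ^ 2 / 4) - Real.sqrt 3 / 4 * δ ^ 2 ≤ v := by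
  set s := Real.sqrt 3 with hsdef
  have hs2 : s ^ 2 = 3 := Real.sq_sqrt (by norm_num)
  have hs0 : 0 < s := Real.sqrt_pos.2 (by norm_num)
  set c := Real.sqrt (1 - δ ^ 2 / 4) with hcdef
  have hc2 : c ^ 2 = 1 - δ ^ 2 / 4 := Real.sq_sqrt (by nlinarith)
  have hc0 : 0 ≤ c := Real.sqrt_nonneg _
  have hv0 : 0 ≤ v := by nlinarith
  have hQ : 0 ≤ 4 * v ^ 2 + 2 * s * δ ^ 2 * v + δ ^ 4 - δ ^ 2 := by
    nlinarith [mul_nonneg (by linarith : (0:ℝ) ≤ 1 - 2 * u)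
        (by linarith : (0:ℝ) ≤ u ^ 2 + v ^ 2 - δ ^ 2),
      mul_nonneg hu0 (by linarith : (0:ℝ) ≤ u ^ 2 + v ^ 2 + s * v - u),
      sq_nonneg (u - δ ^ 2 - s * v)]
  have hc0' : 0 < c := Real.sqrt_pos.2 (by nlinarith)
  by_contra hcon
  push_neg at hcon
  have hA : 0 < δ * c / 2 - (v + s * δ ^ 2 / 4) := by nlinarith [mul_pos hs0 (mul_pos hδ0 hδ0)]
  have hB : 0 < δ * c / 2 + (v + s * δ ^ 2 / 4) := by positivity
  have hcc : δ ^ 2 * c ^ 2 = δ ^ 2 * (1 - δ ^ 2 / 4) := by rw [hc2]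
  have hss : s ^ 2 * δ ^ 4 = 3 * δ ^ 4 := by rw [hs2]
  nlinarith [mul_pos hA hB, hcc, hss]

set_option maxHeartbeats 1000000 in
theorem im_ge_of_far_from_corners {δ : ℝ} (hδ0 : 0 < δ) (hδ : δ < 1 / 2) {τ : ℂ}
    (hτ : τ ∈ closedFD) (h₁ : δ < ‖τ - ρ‖) (h₂ : δ < ‖τ + ρ ^ 2‖) :
    Real.sqrt 3 / 2 + (δ / 2 * Real.sqrt (1 - δ ^ 2 / 4) - Real.sqrt 3 / 4 * δ ^ 2) ≤ τ.im := by
  obtain ⟨him, hre1, hre2, habs⟩ := hτ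
  have hs3 : Real.sqrt 3 ^ 2 = 3 := Real.sq_sqrt (by norm_num)
  have hρre : ρ.re = -(1/2) := by simp [ρ]; ring
  have hρim : ρ.im = Real.sqrt 3 / 2 := by simp [ρ]
  have hsC : (Real.sqrt 3 : ℂ) ^ 2 = 3 := by
    rw [← Complex.ofReal_pow, Real.sq_sqrt] <;> norm_num
  have hρ2 : ρ ^ 2 = (-1 - Real.sqrt 3 * Complex.I) / 2 := by
    rw [ρ]
    linear_combination ((Real.sqrt 3 : ℂ) ^ 2 / 4) * Complex.I_sq - (1/4) * hsC
  have hρ2re : (ρ ^ 2).re = -(1/2) := by rw [hρ2]; simp; ring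
  have hρ2im : (ρ ^ 2).im = -(Real.sqrt 3 / 2) := by rw [hρ2]; simp; ring
  have hxy : 1 ≤ τ.re ^ 2 + τ.im ^ 2 := by
    have h : 1 ≤ ‖τ‖ ^ 2 := by nlinarith [habs, norm_nonneg τ]
    rw [Complex.sq_norm, Complex.normSq_apply] at h
    nlinarith [h]
  have d1 : δ ^ 2 < (τ.re + 1/2) ^ 2 + (τ.im - Real.sqrt 3 / 2) ^ 2 := by
    have h := pow_lt_pow_left₀ h₁ hδ0.le (n := 2) (by norm_num)
    rw [Complex.sq_norm, Complex.normSq_apply, Complex.sub_re, Complex.sub_im, hρre, hρim] at h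
    nlinarith [h]
  have d2 : δ ^ 2 < (τ.re - 1/2) ^ 2 + (τ.im - Real.sqrt 3 / 2) ^ 2 := by
    have h := pow_lt_pow_left₀ h₂ hδ0.le (n := 2) (by norm_num)
    rw [Complex.sq_norm, Complex.normSq_apply, Complex.add_re, Complex.add_im, hρ2re, hρ2im] at h
    nlinarith [h]
  have hvlb : -(Real.sqrt 3) / 2 < τ.im - Real.sqrt 3 / 2 := by linarith
  rcases le_total 0 τ.re with hx | hx
  · have ha1 : δ ^ 2 < (1/2 - τ.re) ^ 2 + (τ.im - Real.sqrt 3 / 2) ^ 2 := by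
      have e : (1/2 - τ.re) ^ 2 = (τ.re - 1/2) ^ 2 := by ring
      linarith [d2, e]
    have e2 : (1/2 - τ.re) ^ 2 + (τ.im - Real.sqrt 3 / 2) ^ 2 +
        Real.sqrt 3 * (τ.im - Real.sqrt 3 / 2) = τ.re ^ 2 + τ.im ^ 2 - τ.re - 1/2 := by
      linear_combination (-1/4 : ℝ) * hs3
    have ha2 : 1/2 - τ.re ≤ (1/2 - τ.re) ^ 2 + (τ.im - Real.sqrt 3 / 2) ^ 2 +
        Real.sqrt 3 * (τ.im - Real.sqrt 3 / 2) := by linarith [hxy, e2]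
    have := key_corner_ineq hδ0 hδ (by linarith) (by linarith) hvlb ha1 ha2
    linarith
  · have ha1 : δ ^ 2 < (1/2 + τ.re) ^ 2 + (τ.im - Real.sqrt 3 / 2) ^ 2 := by
      have e : (1/2 + τ.re) ^ 2 = (τ.re + 1/2) ^ 2 := by ring
      linarith [d1, e]
    have e2 : (1/2 + τ.re) ^ 2 + (τ.im - Real.sqrt 3 / 2) ^ 2 +
        Real.sqrt 3 * (τ.im - Real.sqrt 3 / 2) = τ.re ^ 2 + τ.im ^ 2 + τ.re - 1/2 := by
      linear_combination (-1/4 : ℝ) * hs3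
    have ha2 : 1/2 + τ.re ≤ (1/2 + τ.re) ^ 2 + (τ.im - Real.sqrt 3 / 2) ^ 2 +
        Real.sqrt 3 * (τ.im - Real.sqrt 3 / 2) := by linarith [hxy, e2]
    have := key_corner_ineq hδ0 hδ (by linarith) (by linarith) hvlb ha1 ha2
    linarith
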